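/- Let S ⊆ ℝⁿ be a convex set, f : ℝⁿ → ℝⁿ continuously differentiable, P a real symmetric positive definite n×n matrix, λ ≥ 0, and ε > 0 such that for every ξ ∈ S, Df(ξ)ᵀ P + P Df(ξ) + 2λ P ⪯ −ε I. Then f has at most one zero in S; that is, if ξ_e, ξ_e' ∈ S satisfy f(ξ_e) = f(ξ_e') = 0, then ξ_e = ξ_e'. -/

import Mathlib

open Matrix

/-- The Jacobian matrix of a vector field `f : ℝⁿ → ℝⁿ` at a point `ξ`. -/
noncomputable def jacobianMatrix {n : ℕ} (f : (Fin n → ℝ) → (Fin n → ℝ)) (ξ : Fin n → ℝ) :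
    Matrix (Fin n) (Fin n) ℝ :=
  Matrix.of fun i j => fderiv ℝ f ξ (Pi.single j 1) i

lemma jac_mulVec {n : ℕ} (f : (Fin n → ℝ) → (Fin n → ℝ)) (ξ v : Fin n → ℝ) :
    (jacobianMatrix f ξ).mulVec v = fderiv ℝ f ξ v := by
  have hv : v = ∑ j, v j • (Pi.single j 1 : Fin n → ℝ) := by
    funext i
    simp [Finset.sum_apply, Pi.single_apply]
  conv_rhs => rw [hv, map_sum]
  funext i
  simp [Matrix.mulVec, dotProduct, jacobianMatrix, Finset.sum_apply, mul_comm]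

/-- A `0`-dominant vector field (positive definite certificate `P`,
rate `λ ≥ 0`) on a convex set `S` has at most one zero in `S`. -/
theorem zero_dominant_unique_equilibrium
    {n : ℕ} (S : Set (Fin n → ℝ)) (hS : Convex ℝ S)
    (f : (Fin n → ℝ) → (Fin n → ℝ)) (hf : ContDiff ℝ 1 f)
    (P : Matrix (Fin n) (Fin n) ℝ) (hP : P.PosDef)
    (lam ε : ℝ) (hlam : 0 ≤ lam) (hε : 0 < ε)
    (hLMI : ∀ ξ ∈ S, ∀ v : Fin n → ℝ,
      v ⬝ᵥ (((jacobianMatrix f ξ)ᵀ * P + P * jacobianMatrix f ξ +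
        (2 * lam) • P).mulVec v) ≤ -ε * (v ⬝ᵥ v)) :
    ∀ ξe ∈ S, ∀ ξe' ∈ S, f ξe = 0 → f ξe' = 0 → ξe = ξe' := by
  intro ξe hξe ξe' hξe' h0 h0'
  by_contra hne
  set v : Fin n → ℝ := ξe' - ξe with hvdef
  have hv0 : v ≠ 0 := sub_ne_zero.mpr (Ne.symm hne)
  have hvv : 0 < v ⬝ᵥ v := by
    rcases lt_or_eq_of_le (Finset.sum_nonneg (fun i _ => mul_self_nonneg (v i))) with h | h
    · exact h
    · exact absurd (dotProduct_self_eq_zero.mp h.symm) hv0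
  -- the linear functional w ↦ v ⬝ᵥ P w
  set lin : (Fin n → ℝ) →ₗ[ℝ] ℝ :=
    { toFun := fun w => v ⬝ᵥ P.mulVec w
      map_add' := fun a b => by simp [Matrix.mulVec_add, dotProduct_add]
      map_smul' := fun c a => by simp [Matrix.mulVec_smul, dotProduct_smul] } with hlin
  set L := LinearMap.toContinuousLinearMap lin with hL
  set φ : ℝ → ℝ := fun t => L (f (ξe + t • v)) with hφdef
  have hγ : ∀ t : ℝ, HasDerivAt (fun t : ℝ => ξe + t • v) v t := by
    intro t
    have := ((hasDerivAt_id t).smul_const v).const_add ξe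
    simpa using this
  have hfd : Differentiable ℝ f := hf.differentiable one_ne_zero
  have hf' : ∀ t : ℝ, HasDerivAt (fun t : ℝ => f (ξe + t • v))
      (fderiv ℝ f (ξe + t • v) v) t := fun t =>
    ((hfd (ξe + t • v)).hasFDerivAt).comp_hasDerivAt t (hγ t)
  have hφ : ∀ t : ℝ, HasDerivAt φ (L (fderiv ℝ f (ξe + t • v) v)) t := fun t =>
    (L.hasFDerivAt).comp_hasDerivAt t (hf' t)
  have hmem : ∀ t : ℝ, t ∈ Set.Icc (0:ℝ) 1 → ξe + t • v ∈ S := by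
    intro t ht
    have hmem' := hS hξe hξe' (sub_nonneg.mpr ht.2) ht.1 (by ring)
    have heq : (1 - t) • ξe + t • ξe' = ξe + t • v := by
      simp only [hvdef, smul_sub, sub_smul, one_smul]
      module
    rwa [heq] at hmem'
  have hPsymm : Pᵀ = P := hP.1
  have hderiv_neg : ∀ t : ℝ, t ∈ Set.Icc (0:ℝ) 1 →
      L (fderiv ℝ f (ξe + t • v) v) < 0 := by
    intro t ht
    set ξt := ξe + t • v with hξt
    set J := jacobianMatrix f ξt with hJ
    set w := J.mulVec v with hw
    have key := hLMI ξt (hmem t ht) v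
    have hsym : ∀ a b : Fin n → ℝ, a ⬝ᵥ P.mulVec b = b ⬝ᵥ P.mulVec a := by
      intro a b
      rw [Matrix.dotProduct_mulVec, ← Matrix.mulVec_transpose, hPsymm,
        dotProduct_comm]
    have h1 : v ⬝ᵥ ((Jᵀ * P).mulVec v) = v ⬝ᵥ P.mulVec w := by
      rw [← Matrix.mulVec_mulVec, Matrix.dotProduct_mulVec v Jᵀ,
        Matrix.vecMul_transpose]
      exact hsym w v
    have h2 : v ⬝ᵥ ((P * J).mulVec v) = v ⬝ᵥ P.mulVec w := by
      rw [← Matrix.mulVec_mulVec]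
    have hPv : 0 ≤ v ⬝ᵥ P.mulVec v := le_of_lt (by simpa using (Matrix.posDef_iff_dotProduct_mulVec.mp hP).2 hv0)
    have hkey2 : 2 * (v ⬝ᵥ P.mulVec w) + 2 * lam * (v ⬝ᵥ P.mulVec v)
        ≤ -ε * (v ⬝ᵥ v) := by
      have : v ⬝ᵥ (((Jᵀ * P) + P * J + (2 * lam) • P).mulVec v)
          = 2 * (v ⬝ᵥ P.mulVec w) + 2 * lam * (v ⬝ᵥ P.mulVec v) := by
        rw [Matrix.add_mulVec, Matrix.add_mulVec, dotProduct_add, dotProduct_add,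
          Matrix.smul_mulVec, dotProduct_smul, h1, h2]
        ring_nf
      rw [this] at key
      exact key
    have hLw : L (fderiv ℝ f ξt v) = v ⬝ᵥ P.mulVec w := by
      simp only [hL, hlin, LinearMap.coe_toContinuousLinearMap', LinearMap.coe_mk,
        AddHom.coe_mk]
      rw [hw, hJ, jac_mulVec]
    rw [hLw]
    nlinarith [mul_nonneg hlam hPv]
  have hanti : StrictAntiOn φ (Set.Icc 0 1) := by
    apply strictAntiOn_of_deriv_neg (convex_Icc 0 1)
    · exact fun t _ => (hφ t).continuousAt.continuousWithinAt
    · intro t ht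
      rw [interior_Icc] at ht
      rw [(hφ t).deriv]
      exact hderiv_neg t ⟨le_of_lt ht.1, le_of_lt ht.2⟩
  have h01 : φ 1 < φ 0 := hanti (by norm_num) (by norm_num) (by norm_num)
  have hφ0 : φ 0 = 0 := by
    show L (f (ξe + (0:ℝ) • v)) = 0
    rw [zero_smul, add_zero, h0, map_zero]
  have hφ1 : φ 1 = 0 := by
    have h1v : ξe + (1:ℝ) • v = ξe' := by
      rw [one_smul, hvdef]; abel
    show L (f (ξe + (1:ℝ) • v)) = 0
    rw [h1v, h0', map_zero]
  rw [hφ0, hφ1] at h01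
  exact lt_irrefl 0 h01
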